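/- If ‖b‖ < 1/(2‖a‖), then g_a(b) = b·(1 + Ψ_a(b)) where Ψ_a(b) = Σ_{n≥1} E((ab)ⁿ) satisfies ‖Ψ_a(b)‖ < 1, hence 1 + Ψ_a(b) is invertible and g_a(b) is invertible in B if and only if b is invertible in B. -/

import Mathlib

/-- `g_a(b) = b ⬝ E((1 - ab)⁻¹)`. -/
noncomputable def gA {A : Type*} [NormedRing A] [NormedAlgebra ℂ A] [CompleteSpace A]
    (E : A →L[ℂ] A) (a b : A) : A :=
  b * E (Ring.inverse (1 - a * b))

theorem stmt6 {A : Type*} [NormedRing A] [NormedAlgebra ℂ A] [CompleteSpace A]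
    (B : Subalgebra ℂ A) (hB : IsClosed (B : Set A))
    (E : A →L[ℂ] A) (hrange : ∀ x : A, E x ∈ B) (hfix : ∀ x ∈ B, E x = x)
    (hnorm : ∀ x : A, ‖E x‖ ≤ ‖x‖)
    (hbimod : ∀ b₁ ∈ B, ∀ b₂ ∈ B, ∀ x : A, E (b₁ * x * b₂) = b₁ * E x * b₂)
    (a : A) (ha : a ≠ 0) (b : A) (hbB : b ∈ B) (hb : ‖b‖ < 1 / (2 * ‖a‖)) :
    gA E a b = b * (1 + ∑' n : ℕ, E ((a * b) ^ (n + 1))) ∧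
    ‖∑' n : ℕ, E ((a * b) ^ (n + 1))‖ < 1 ∧
    IsUnit (1 + ∑' n : ℕ, E ((a * b) ^ (n + 1))) ∧
    ((∃ c ∈ B, gA E a b * c = 1 ∧ c * gA E a b = 1) ↔ (∃ c ∈ B, b * c = 1 ∧ c * b = 1)) := by
  have hapos : (0 : ℝ) < ‖a‖ := norm_pos_iff.mpr ha
  set t := a * b with ht
  have hab : ‖t‖ < 1 / 2 := by
    calc ‖t‖ ≤ ‖a‖ * ‖b‖ := norm_mul_le _ _
      _ < ‖a‖ * (1 / (2 * ‖a‖)) := by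
          exact mul_lt_mul_of_pos_left hb hapos
      _ = 1 / 2 := by field_simp
  have hab1 : ‖t‖ < 1 := hab.trans (by norm_num)
  have hgeo : Summable (fun n : ℕ => ‖t‖ ^ n) :=
    summable_geometric_of_lt_one (norm_nonneg t) hab1
  have hsn : Summable (fun n : ℕ => ‖t‖ ^ (n + 1)) := by
    simpa [pow_succ'] using hgeo.mul_left ‖t‖
  have hbound : ∀ n : ℕ, ‖E (t ^ (n + 1))‖ ≤ ‖t‖ ^ (n + 1) := fun n =>
    (hnorm _).trans (norm_pow_le' t n.succ_pos)
  have hsf : Summable (fun n : ℕ => E (t ^ (n + 1))) :=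
    Summable.of_norm_bounded hsn hbound
  set Ψ := ∑' n : ℕ, E (t ^ (n + 1)) with hΨ
  -- norm bound
  have hsfn : Summable (fun n : ℕ => ‖E (t ^ (n + 1))‖) :=
    hsn.of_nonneg_of_le (fun n => norm_nonneg _) hbound
  have htsum_geo : ∑' n : ℕ, ‖t‖ ^ (n + 1) = ‖t‖ * (1 - ‖t‖)⁻¹ := by
    simp only [pow_succ']
    rw [tsum_mul_left, tsum_geometric_of_lt_one (norm_nonneg t) hab1]
  have hΨlt : ‖Ψ‖ < 1 := by
    have h1 : ‖Ψ‖ ≤ ∑' n : ℕ, ‖E (t ^ (n + 1))‖ := norm_tsum_le_tsum_norm hsfn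
    have h2 : ∑' n : ℕ, ‖E (t ^ (n + 1))‖ ≤ ∑' n : ℕ, ‖t‖ ^ (n + 1) :=
      Summable.tsum_le_tsum hbound hsfn hsn
    have h3 : ‖t‖ * (1 - ‖t‖)⁻¹ < 1 := by
      rw [← div_eq_mul_inv]
      exact (div_lt_one (by linarith)).mpr (by linarith)
    calc ‖Ψ‖ ≤ ∑' n : ℕ, ‖t‖ ^ (n + 1) := h1.trans h2
      _ = ‖t‖ * (1 - ‖t‖)⁻¹ := htsum_geo
      _ < 1 := h3
  -- first conjunct
  have hsg : Summable (fun n : ℕ => t ^ n) := summable_geometric_of_norm_lt_one hab1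
  have heq : gA E a b = b * (1 + Ψ) := by
    have h0 : Ring.inverse (1 - t) = ∑' n : ℕ, t ^ n := (geom_series_eq_inverse t hab1).symm
    have h1 : E (∑' n : ℕ, t ^ n) = ∑' n : ℕ, E (t ^ n) := E.map_tsum hsg
    have h2 : ∑' n : ℕ, E (t ^ n) = E (t ^ 0) + ∑' n : ℕ, E (t ^ (n + 1)) :=
      Summable.tsum_eq_zero_add (hsg.map E E.continuous)
    have h3 : E (t ^ 0) = 1 := by
      rw [pow_zero]; exact hfix 1 B.one_mem
    rw [gA, ← ht, h0, h1, h2, h3]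
  refine ⟨heq, hΨlt, ?_, ?_⟩
  · exact ⟨Units.oneSub (-Ψ) (by simpa using hΨlt), sub_neg_eq_add 1 Ψ⟩
  · -- membership facts
    have hΨB : Ψ ∈ B :=
      hB.mem_of_tendsto hsf.hasSum
        (Filter.Eventually.of_forall fun s => sum_mem fun i _ => hrange _)
    set u : Aˣ := Units.oneSub (-Ψ) (by simpa using hΨlt) with hu
    have huval : (u : A) = 1 + Ψ := sub_neg_eq_add 1 Ψ
    have huB : (u : A) ∈ B := by rw [huval]; exact add_mem B.one_mem hΨB
    have huinv : ((u⁻¹ : Aˣ) : A) = ∑' n : ℕ, (-Ψ) ^ n := rfl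
    have huinvB : ((u⁻¹ : Aˣ) : A) ∈ B := by
      rw [huinv]
      exact hB.mem_of_tendsto
        (summable_geometric_of_norm_lt_one (by simpa using hΨlt)).hasSum
        (Filter.Eventually.of_forall fun s =>
          sum_mem fun i _ => pow_mem (neg_mem hΨB) i)
    have hg : gA E a b = b * (u : A) := by rw [heq, huval]
    constructor
    · rintro ⟨c, hcB, hgc, hcg⟩
      refine ⟨(u : A) * c, mul_mem huB hcB, ?_, ?_⟩
      · rw [← mul_assoc, ← hg]; exact hgc
      · -- c * (b * u) = 1 ⇒ c * b = u⁻¹ ⇒ (u*c)*b = 1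
        have h1 : c * b = ((u⁻¹ : Aˣ) : A) := by
          have := hcg
          rw [hg, ← mul_assoc] at this
          calc c * b = c * b * ((u : A) * ((u⁻¹ : Aˣ) : A)) := by
                rw [u.mul_inv, mul_one]
            _ = c * b * (u : A) * ((u⁻¹ : Aˣ) : A) := by
                simp only [mul_assoc]
            _ = ((u⁻¹ : Aˣ) : A) := by rw [this, one_mul]
        rw [mul_assoc, h1, u.mul_inv]
    · rintro ⟨c, hcB, hbc, hcb⟩
      refine ⟨((u⁻¹ : Aˣ) : A) * c, mul_mem huinvB hcB, ?_, ?_⟩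
      · rw [hg]
        calc b * (u : A) * (((u⁻¹ : Aˣ) : A) * c)
            = b * ((u : A) * ((u⁻¹ : Aˣ) : A)) * c := by
              simp only [mul_assoc]
          _ = 1 := by rw [u.mul_inv, mul_one, hbc]
      · rw [hg]
        calc ((u⁻¹ : Aˣ) : A) * c * (b * (u : A))
            = ((u⁻¹ : Aˣ) : A) * (c * b) * (u : A) := by
              simp only [mul_assoc]
          _ = 1 := by rw [hcb, mul_one, u.inv_mul]
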